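/- Let 𝒥 = [[a,0,0,-x],[0,a,x,0],[0,-y,-a,0],[y,0,0,-a]] and 𝒥' = [[a',0,0,-x],[0,a',x,0],[0,-y',-a',0],[y',0,0,-a']] be 4×4 real matrices with x ≠ 0, a² = xy - 1 and a'² = xy' - 1. Then there exists a 2×2 matrix B = r·[[0,-1],[1,0]] with r ∈ ℝ such that e^{-B} 𝒥 e^{B} = 𝒥', where e^B is the block matrix [[I,0],[B,I]]. -/
import Mathlib


theorem noncomplex_types_B_equivalent (a a' x y y' : ℝ) (hx : x ≠ 0)
    (h : a ^ 2 = x * y - 1) (h' : a' ^ 2 = x * y' - 1) :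
    ∃ r : ℝ,
      -- e^{-B}, with B = r·[[0,-1],[1,0]]
      (!![1, 0, 0, 0;
          0, 1, 0, 0;
          0, r, 1, 0;
          -r, 0, 0, 1] : Matrix (Fin 4) (Fin 4) ℝ) *
        !![a, 0, 0, -x;
           0, a, x, 0;
           0, -y, -a, 0;
           y, 0, 0, -a] *
      -- e^{B}
        !![1, 0, 0, 0;
           0, 1, 0, 0;
           0, -r, 1, 0;
           r, 0, 0, 1]
      = !![a', 0, 0, -x;
           0, a', x, 0;
           0, -y', -a', 0;
           y', 0, 0, -a'] := by
  use (a - a') / x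
  ext i j
  fin_cases i <;> fin_cases j <;>
    simp [Matrix.mul_apply, Fin.sum_univ_succ] <;>
    field_simp <;> nlinarith [h, h', sq_nonneg (a - a')]
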